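/- arXiv:2603.20277 — 3 statements merged into one kernel-verified Lean document; each statement's English description precedes it below -/
import Mathlib

section
/- The excess demand function f(λ) = Σᵢ xᵢ*(λ) − y*(λ) is continuous and strictly decreasing on (0,∞), and f(λ) → −∞ as λ → ∞. -/
/-- The excess demand function f(λ) = Σᵢ xᵢ*(λ) − y*(λ) is continuous and
strictly decreasing on (0,∞), and f(λ) → −∞ as λ → ∞. Here g i is the
continuous strictly decreasing inverse (uᵢ')⁻¹ and ystar = (C')⁻¹ is
continuous, strictly increasing and tends to ∞. -/
theorem stmt_4 (n : ℕ) (g : Fin n → ℝ → ℝ) (b : Fin n → ℝ)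
    (hb : ∀ i, 0 < b i)
    (hgc : ∀ i, ContinuousOn (g i) (Set.Ioi 0))
    (hga : ∀ i, StrictAntiOn (g i) (Set.Ioi 0))
    (ystar : ℝ → ℝ)
    (hyc : ContinuousOn ystar (Set.Ioi 0))
    (hym : StrictMonoOn ystar (Set.Ioi 0))
    (hyt : Filter.Tendsto ystar Filter.atTop Filter.atTop) :
    ContinuousOn
        (fun l => (∑ i, max 0 (min (g i l) (b i / l))) - ystar l) (Set.Ioi 0) ∧
      StrictAntiOn
        (fun l => (∑ i, max 0 (min (g i l) (b i / l))) - ystar l) (Set.Ioi 0) ∧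
      Filter.Tendsto
        (fun l => (∑ i, max 0 (min (g i l) (b i / l))) - ystar l)
        Filter.atTop Filter.atBot := by
  have hxanti : ∀ i : Fin n, AntitoneOn (fun l => max 0 (min (g i l) (b i / l)))
      (Set.Ioi 0) := by
    intro i a ha c hc hac
    rcases eq_or_lt_of_le hac with rfl | h
    · exact le_rfl
    · refine max_le_max le_rfl (min_le_min (hga i ha hc h).le ?_)
      exact div_le_div_of_nonneg_left (hb i).le (Set.mem_Ioi.mp ha) hac
  have hsanti : AntitoneOn (fun l => ∑ i, max 0 (min (g i l) (b i / l)))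
      (Set.Ioi 0) := fun a ha c hc hac =>
    Finset.sum_le_sum fun i _ => hxanti i ha hc hac
  have hsc : ContinuousOn (fun l => ∑ i, max 0 (min (g i l) (b i / l)))
      (Set.Ioi 0) := by
    refine continuousOn_finset_sum _ fun i _ => ?_
    exact continuousOn_const.sup ((hgc i).inf
      (continuousOn_const.div continuousOn_id fun l hl => ne_of_gt hl))
  refine ⟨hsc.sub hyc, ?_, ?_⟩
  · intro a ha c hc hac
    have h1 := hym ha hc hac
    have h2 := hsanti ha hc hac.le
    simp only
    linarith
  · have h1 : (1:ℝ) ∈ Set.Ioi 0 := Set.mem_Ioi.mpr one_pos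
    refine Filter.tendsto_atBot_mono' _ ?_
      (Filter.tendsto_atBot_add_const_left _ (∑ i, max 0 (min (g i 1) (b i / 1)))
        (Filter.tendsto_neg_atTop_atBot.comp hyt))
    filter_upwards [Filter.eventually_ge_atTop (1:ℝ)] with l hl
    have hlpos : l ∈ Set.Ioi (0:ℝ) := Set.mem_Ioi.mpr (lt_of_lt_of_le one_pos hl)
    have := hsanti h1 hlpos hl
    simp only [Function.comp_apply]
    linarith
end

section
/- For quadratic utility u(x) = βx − (α/2)x² with β² ≥ 4αb, the piecewise function û equal to u(x) on [0, x̃_lo], to b·log(x) + u(x̃_lo) − b·log(x̃_lo) on [x̃_lo, x̃_hi], and to u(x) + constant (chosen for continuity) on [x̃_hi, ∞) is continuously differentiable with û'(x) = min{u'(x), b/x} for all x > 0. -/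
open Real Set Filter Topology

lemma aux15 (α β b xlo xhi : ℝ) (hα : 0 < α) (hb : 0 < b) (hlo : 0 < xlo)
    (hle : xlo ≤ xhi)
    (hfac : ∀ y : ℝ, α * y ^ 2 - β * y + b = α * (y - xlo) * (y - xhi)) :
    ∀ x : ℝ, 0 < x →
      HasDerivAt
        (fun y : ℝ =>
          if y ≤ xlo then β * y - α / 2 * y ^ 2
          else if y ≤ xhi then
            b * Real.log y + (β * xlo - α / 2 * xlo ^ 2) - b * Real.log xlo
          else (β * y - α / 2 * y ^ 2) +
            (b * Real.log xhi + (β * xlo - α / 2 * xlo ^ 2) - b * Real.log xlo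
              - (β * xhi - α / 2 * xhi ^ 2)))
        (min (β - α * x) (b / x)) x := by
  intro x hx
  have hhi : 0 < xhi := lt_of_lt_of_le hlo hle
  have hlo_eq : β - α * xlo = b / xlo := by
    have h0 := hfac xlo
    rw [eq_div_iff hlo.ne']
    nlinarith [h0]
  have hhi_eq : β - α * xhi = b / xhi := by
    have h0 := hfac xhi
    rw [eq_div_iff hhi.ne']
    nlinarith [h0]
  set F : ℝ → ℝ := fun y : ℝ =>
          if y ≤ xlo then β * y - α / 2 * y ^ 2
          else if y ≤ xhi then
            b * Real.log y + (β * xlo - α / 2 * xlo ^ 2) - b * Real.log xlo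
          else (β * y - α / 2 * y ^ 2) +
            (b * Real.log xhi + (β * xlo - α / 2 * xlo ^ 2) - b * Real.log xlo
              - (β * xhi - α / 2 * xhi ^ 2)) with hF
  have hu : ∀ y : ℝ, HasDerivAt (fun z : ℝ => β * z - α / 2 * z ^ 2) (β - α * y) y := by
    intro y
    have h1 := ((hasDerivAt_id y).const_mul β).sub ((hasDerivAt_pow 2 y).const_mul (α / 2))
    convert h1 using 1
    · rfl
    · rfl
    · rfl
    all_goals simp; ring
  have hlogd : HasDerivAt
      (fun z : ℝ => b * Real.log z + (β * xlo - α / 2 * xlo ^ 2) - b * Real.log xlo)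
      (b / x) x := by
    have h1 := (((Real.hasDerivAt_log hx.ne').const_mul b).add_const
      (β * xlo - α / 2 * xlo ^ 2)).sub_const (b * Real.log xlo)
    convert h1 using 1
    · rfl
    · rfl
    all_goals ring
  have hminl : x ≤ xlo ∨ xhi ≤ x → min (β - α * x) (b / x) = β - α * x := by
    intro h
    apply min_eq_left
    rw [le_div_iff₀ hx]
    have h1 : 0 ≤ α * (x - xlo) * (x - xhi) := by
      rcases h with h | h
      · have p : 0 ≤ (xlo - x) * (xhi - x) := mul_nonneg (by linarith) (by linarith)
        nlinarith [p]
      · have p : 0 ≤ (x - xlo) * (x - xhi) := mul_nonneg (by linarith) (by linarith)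
        nlinarith [p]
    nlinarith [hfac x]
  have hminm : xlo ≤ x → x ≤ xhi → min (β - α * x) (b / x) = b / x := by
    intro h1 h2
    apply min_eq_right
    rw [div_le_iff₀ hx]
    have h3 : α * (x - xlo) * (x - xhi) ≤ 0 := by
      have p : 0 ≤ (x - xlo) * (xhi - x) := mul_nonneg (by linarith) (by linarith)
      nlinarith [p]
    nlinarith [hfac x]
  rcases lt_trichotomy x xlo with h | h | h
  · -- x < xlo
    rw [hminl (Or.inl h.le)]
    refine (hu x).congr_of_eventuallyEq ?_
    filter_upwards [eventually_lt_nhds h] with y hy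
    simp [hF, hy.le]
  · -- x = xlo
    rcases eq_or_lt_of_le hle with heq | hlt
    · -- degenerate: xlo = xhi, F = u
      have hFu : F = fun y : ℝ => β * y - α / 2 * y ^ 2 := by
        funext y
        simp only [hF]
        split_ifs with h1 h2
        · rfl
        · exact absurd (heq ▸ h2) h1
        · rw [← heq]; ring
      rw [hminl (Or.inl h.le), hFu]
      exact hu x
    · -- xlo < xhi, glue at xlo
      have hleft : HasDerivWithinAt F (β - α * x) (Iic x) x := by
        refine ((hu x).hasDerivWithinAt).congr (fun y hy => ?_) ?_
        · simp [hF, show y ≤ xlo from h ▸ hy]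
        · simp [hF, h.le, h]
      have hright : HasDerivWithinAt F (β - α * x) (Ici x) x := by
        have key : HasDerivWithinAt F (b / x) (Ici x) x := by
          refine (hlogd.hasDerivWithinAt).congr_of_eventuallyEq ?_ ?_
          · have hmem : Iio xhi ∈ 𝓝[Ici x] x :=
              nhdsWithin_le_nhds (Iio_mem_nhds (h ▸ hlt))
            filter_upwards [hmem, self_mem_nhdsWithin] with y hy1 hy2
            by_cases hyl : y ≤ xlo
            · have hyx : y = xlo := le_antisymm hyl (h ▸ mem_Ici.mp hy2)
              simp [hF, hyx]
              try ring
            · simp [hF, hyl, (mem_Iio.mp hy1).le]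
          · simp [hF, le_refl x, h]
            try ring
        have : b / x = β - α * x := by rw [h, ← hlo_eq]
        rwa [this] at key
      rw [hminl (Or.inl h.le)]
      have := hleft.union hright
      rw [Iic_union_Ici] at this
      exact hasDerivWithinAt_univ.mp this
  · -- xlo < x
    rcases lt_trichotomy x xhi with h2 | h2 | h2
    · rw [hminm h.le h2.le]
      refine hlogd.congr_of_eventuallyEq ?_
      filter_upwards [eventually_gt_nhds h, eventually_lt_nhds h2] with y hy1 hy2
      simp [hF, not_le.2 hy1, hy2.le]
    · -- x = xhi, glue
      have hleft : HasDerivWithinAt F (b / x) (Iic x) x := by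
        refine (hlogd.hasDerivWithinAt).congr_of_eventuallyEq ?_ ?_
        · have hmem : Ioi xlo ∈ 𝓝[Iic x] x := nhdsWithin_le_nhds (Ioi_mem_nhds h)
          filter_upwards [hmem, self_mem_nhdsWithin] with y hy1 hy2
          simp [hF, not_le.2 (mem_Ioi.mp hy1), show y ≤ xhi from h2 ▸ hy2]
        · simp [hF, not_le.2 h, le_of_eq h2]
      have hright : HasDerivWithinAt F (b / x) (Ici x) x := by
        have key : HasDerivAt
            (fun y : ℝ => (β * y - α / 2 * y ^ 2) +
              (b * Real.log xhi + (β * xlo - α / 2 * xlo ^ 2) - b * Real.log xlo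
                - (β * xhi - α / 2 * xhi ^ 2))) (β - α * x) x := by
          exact (hu x).add_const _
        have key2 : HasDerivWithinAt F (β - α * x) (Ici x) x := by
          refine (key.hasDerivWithinAt).congr (fun y hy => ?_) ?_
          · have hy1 : ¬ y ≤ xlo := not_le.2 (lt_of_lt_of_le h (h2 ▸ hy))
            by_cases hy2 : y ≤ xhi
            · have hyx : y = xhi := le_antisymm hy2 (h2 ▸ mem_Ici.mp hy)
              have hxx : ¬ xhi ≤ xlo := not_le.2 (h2 ▸ h)
              simp [hF, hyx, hxx]
              try ring
            · simp [hF, hy1, hy2]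
          · have hxx : ¬ xhi ≤ xlo := not_le.2 (h2 ▸ h)
            simp [hF, h2, hxx]
            try ring
        have : β - α * x = b / x := by rw [h2, hhi_eq]
        rwa [this] at key2
      rw [hminm h.le h2.le]
      have := hleft.union hright
      rw [Iic_union_Ici] at this
      exact hasDerivWithinAt_univ.mp this
    · -- xhi < x
      rw [hminl (Or.inr h2.le)]
      refine ((hu x).add_const (b * Real.log xhi + (β * xlo - α / 2 * xlo ^ 2) - b * Real.log xlo - (β * xhi - α / 2 * xhi ^ 2))).congr_of_eventuallyEq ?_
      filter_upwards [eventually_gt_nhds h2] with y hy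
      have hy1 : ¬ y ≤ xlo := not_le.2 (lt_of_le_of_lt hle hy)
      simp [hF, hy1, not_le.2 hy]

/-- For quadratic utility u(x) = βx − (α/2)x² with β² ≥ 4αb, the piecewise
function û (equal to u below x̃_lo, to b·log x + const on [x̃_lo, x̃_hi], and
to u + const above x̃_hi, with constants chosen for continuity) is
differentiable with û'(x) = min{u'(x), b/x} for all x > 0. -/
theorem stmt_15 (α β b : ℝ) (hα : 0 < α) (hβ : 0 < β) (hb : 0 < b)
    (hdisc : β ^ 2 ≥ 4 * α * b) :
    ∀ x : ℝ, 0 < x →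
      HasDerivAt
        (fun y : ℝ =>
          let u := fun z : ℝ => β * z - α / 2 * z ^ 2
          let xlo := (β - Real.sqrt (β ^ 2 - 4 * α * b)) / (2 * α)
          let xhi := (β + Real.sqrt (β ^ 2 - 4 * α * b)) / (2 * α)
          if y ≤ xlo then u y
          else if y ≤ xhi then b * Real.log y + u xlo - b * Real.log xlo
          else u y + (b * Real.log xhi + u xlo - b * Real.log xlo - u xhi))
        (min (β - α * x) (b / x)) x := by
  have hs2 : Real.sqrt (β ^ 2 - 4 * α * b) ^ 2 = β ^ 2 - 4 * α * b :=
    Real.sq_sqrt (by linarith)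
  set s := Real.sqrt (β ^ 2 - 4 * α * b) with hs
  have hs0 : 0 ≤ s := Real.sqrt_nonneg _
  have hsβ : s < β := by nlinarith [mul_pos hα hb]
  have hlo : 0 < (β - s) / (2 * α) := div_pos (by linarith) (by linarith)
  have hle : (β - s) / (2 * α) ≤ (β + s) / (2 * α) := by
    gcongr <;> linarith
  have hfac : ∀ y : ℝ,
      α * y ^ 2 - β * y + b = α * (y - (β - s) / (2 * α)) * (y - (β + s) / (2 * α)) := by
    intro y
    have h2 : (2 * α) ≠ 0 := by positivity
    field_simp
    nlinarith [hs2]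
  exact aux15 α β b _ _ hα hb hlo hle hfac
end

section
/- Suppose the market-clearing price λ* satisfies Σᵢ xᵢ*(λ*) = y*(λ*), where xᵢ*(λ) = min{(uᵢ')⁻¹(λ), bᵢ/λ} > 0 and y*(λ) = (C')⁻¹(λ). Then the allocation (x*(λ*), y*(λ*)) together with λ* solves the modified welfare maximization problem: it maximizes Σᵢ ûᵢ(xᵢ) − C(y) subject to Σᵢ xᵢ = y, xᵢ ≥ 0, where ûᵢ is any continuously differentiable function with ûᵢ'(x) = min{uᵢ'(x), bᵢ/x}. -/
open Set

/-- Key helper: if `f` is continuous on `[0,∞)`, differentiable on `(0,∞)` with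
antitone derivative `g`, and `g xs = L`, then `f x - L x` is maximized at `xs`. -/
lemma key_max {f g : ℝ → ℝ} {L xs : ℝ} (hxs : 0 < xs)
    (hc : ContinuousOn f (Set.Ici 0))
    (hd : ∀ x ∈ Set.Ioi (0:ℝ), HasDerivAt f (g x) x)
    (hganti : AntitoneOn g (Set.Ioi 0))
    (hgxs : g xs = L) :
    ∀ x, 0 ≤ x → f x - L * x ≤ f xs - L * xs := by
  intro x hx
  set F : ℝ → ℝ := fun t => f t - L * t with hF
  have hFd : ∀ t ∈ Set.Ioi (0:ℝ), HasDerivAt F (g t - L) t := by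
    intro t ht
    exact ((hd t ht).sub ((hasDerivAt_id t).const_mul L)).congr_deriv (by ring)
  have hFc : ContinuousOn F (Set.Ici 0) :=
    hc.sub ((continuous_const.mul continuous_id).continuousOn)
  rcases le_total x xs with hle | hle
  · -- F monotone on [0, xs]
    have hmono : MonotoneOn F (Set.Icc 0 xs) := by
      apply monotoneOn_of_deriv_nonneg (convex_Icc 0 xs) (hFc.mono Icc_subset_Ici_self)
      · intro t ht
        rw [interior_Icc] at ht
        exact (hFd t ht.1).differentiableAt.differentiableWithinAt
      · intro t ht
        rw [interior_Icc] at ht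
        rw [(hFd t ht.1).deriv]
        have : L ≤ g t := hgxs ▸ hganti ht.1 hxs ht.2.le
        linarith
    exact hmono ⟨hx, hle⟩ ⟨le_of_lt hxs, le_refl xs⟩ hle
  · -- F antitone on [xs, x]
    have hanti : AntitoneOn F (Set.Icc xs x) := by
      apply antitoneOn_of_deriv_nonpos (convex_Icc xs x)
        (hFc.mono (fun t ht => le_trans hxs.le ht.1))
      · intro t ht
        rw [interior_Icc] at ht
        exact (hFd t (lt_trans hxs ht.1)).differentiableAt.differentiableWithinAt
      · intro t ht
        rw [interior_Icc] at ht
        rw [(hFd t (lt_trans hxs ht.1)).deriv]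
        have : g t ≤ L := hgxs ▸ hganti hxs (lt_trans hxs ht.1) ht.1.le
        linarith
    exact hanti ⟨le_refl xs, hle⟩ ⟨hle, le_refl x⟩ hle

/-- If the market-clearing price λ* satisfies Σᵢ xᵢ*(λ*) = y*(λ*) with
xᵢ*(λ*) = min{(uᵢ')⁻¹(λ*), bᵢ/λ*} > 0 and C'(y*(λ*)) = λ*, then the
allocation (x*(λ*), y*(λ*)) maximizes the modified welfare
Σᵢ ûᵢ(xᵢ) − C(y) subject to Σᵢ xᵢ = y, xᵢ ≥ 0, where ûᵢ is any
continuously differentiable function with ûᵢ'(x) = min{uᵢ'(x), bᵢ/x}. -/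
theorem stmt_19 (n : ℕ) (u' uh : Fin n → ℝ → ℝ) (b : Fin n → ℝ)
    (C C' : ℝ → ℝ) (lstar : ℝ) (xinv : Fin n → ℝ) (ystar : ℝ)
    (hb : ∀ i, 0 < b i) (hl : 0 < lstar)
    (hu'anti : ∀ i, StrictAntiOn (u' i) (Set.Ioi 0))
    (huhcont : ∀ i, ContinuousOn (uh i) (Set.Ici 0))
    (huhderiv : ∀ i, ∀ x ∈ Set.Ioi (0 : ℝ),
      HasDerivAt (uh i) (min (u' i x) (b i / x)) x)
    (hCconv : StrictConvexOn ℝ (Set.Ici 0) C)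
    (hCderiv : ∀ y ∈ Set.Ici (0 : ℝ), HasDerivAt C (C' y) y)
    (hxinv : ∀ i, 0 < xinv i) (hval : ∀ i, u' i (xinv i) = lstar)
    (hystar : 0 ≤ ystar) (hCval : C' ystar = lstar)
    (hclear : (∑ i, min (xinv i) (b i / lstar)) = ystar) :
    ∀ x : Fin n → ℝ, ∀ y : ℝ, (∀ i, 0 ≤ x i) → (∑ i, x i) = y →
      (∑ i, uh i (x i)) - C y ≤
        (∑ i, uh i (min (xinv i) (b i / lstar))) - C ystar := by
  intro x y hxnn hsum
  set xs : Fin n → ℝ := fun i => min (xinv i) (b i / lstar) with hxs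
  have hxspos : ∀ i, 0 < xs i := fun i =>
    lt_min (hxinv i) (div_pos (hb i) hl)
  -- derivative value at xs i is lstar
  have hgxs : ∀ i, min (u' i (xs i)) (b i / xs i) = lstar := by
    intro i
    rcases le_total (xinv i) (b i / lstar) with h | h
    · have hxsi : xs i = xinv i := min_eq_left h
      rw [hxsi, hval i]
      have : lstar ≤ b i / xinv i := by
        rw [le_div_iff₀ (hxinv i)]
        calc lstar * xinv i ≤ lstar * (b i / lstar) := by
              exact mul_le_mul_of_nonneg_left h hl.le
          _ = b i := by field_simp
      exact min_eq_left this
    · have hxsi : xs i = b i / lstar := min_eq_right h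
      have hbx : b i / xs i = lstar := by
        rw [hxsi]; field_simp; rw [div_self (hb i).ne']
      rw [hbx]
      rcases eq_or_lt_of_le h with heq | hlt
      · rw [hxsi, heq, hval i]; simp
      · have : lstar < u' i (xs i) := by
          rw [← hval i]
          exact hu'anti i (hxspos i) (mem_Ioi.mpr (hxinv i)) (hxsi ▸ hlt)
        exact min_eq_right this.le
  -- antitone derivative
  have hganti : ∀ i, AntitoneOn (fun t => min (u' i t) (b i / t)) (Set.Ioi 0) := by
    intro i a ha c hc hac
    exact min_le_min ((hu'anti i).antitoneOn ha hc hac)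
      (div_le_div_of_nonneg_left (hb i).le ha hac)
  -- per-consumer inequality
  have hkey : ∀ i, uh i (x i) - lstar * x i ≤ uh i (xs i) - lstar * xs i := by
    intro i
    exact key_max (hxspos i) (huhcont i) (huhderiv i) (hganti i) (hgxs i) (x i) (hxnn i)
  -- producer inequality: C y - lstar * y ≥ C ystar - lstar * ystar
  have hynn : 0 ≤ y := hsum ▸ Finset.sum_nonneg fun i _ => hxnn i
  have hCkey : C ystar - lstar * ystar ≤ C y - lstar * y := by
    rcases lt_trichotomy y ystar with hlt | heq | hlt
    · have := hCconv.convexOn.slope_le_of_hasDerivAt (mem_Ici.mpr hynn)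
        (mem_Ici.mpr hystar) hlt (hCderiv ystar hystar)
      rw [hCval, slope_def_field, div_le_iff₀ (by linarith : (0:ℝ) < ystar - y)] at this
      linarith
    · rw [heq]
    · have := hCconv.convexOn.le_slope_of_hasDerivAt (mem_Ici.mpr hystar)
        (mem_Ici.mpr hynn) hlt (hCderiv ystar hystar)
      rw [hCval, slope_def_field, le_div_iff₀ (by linarith : (0:ℝ) < y - ystar)] at this
      linarith
  have hsum1 : (∑ i, (uh i (x i) - lstar * x i)) ≤
      ∑ i, (uh i (xs i) - lstar * xs i) :=
    Finset.sum_le_sum fun i _ => hkey i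
  have e1 : (∑ i, (uh i (x i) - lstar * x i)) =
      (∑ i, uh i (x i)) - lstar * y := by
    rw [Finset.sum_sub_distrib, ← Finset.mul_sum, hsum]
  have e2 : (∑ i, (uh i (xs i) - lstar * xs i)) =
      (∑ i, uh i (xs i)) - lstar * ystar := by
    rw [Finset.sum_sub_distrib, ← Finset.mul_sum, hxs, hclear]
  rw [e1, e2] at hsum1
  linarith
end
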